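/- Let S ⊊ ℝⁿ be a proper basic semialgebraic set, i.e., S = {x ∈ ℝⁿ : g₁(x) *₁ 0, …, g_r(x) *_r 0} where each g_i is a polynomial and each *_i is either > or ≥. Then ℝ^{n+1} \ (S × {0}) is the image of a polynomial map ℝ^{n+1} → ℝ^{n+1}. -/

import Mathlib

open MvPolynomial

namespace SAaux

open Filter

/-- The one-variable gadget polynomial. -/
noncomputable def phi (b : Bool) (G t : ℝ) : ℝ :=
  if b then t * ((t ^ 2 - 1) ^ 2 + G) else t * (t ^ 2 + G)

/-- The condition "G *_b 0". -/
def condB (b : Bool) (G : ℝ) : Prop := if b then 0 < G else 0 ≤ G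

lemma phi_zero (b : Bool) (G : ℝ) : phi b G 0 = 0 := by
  cases b <;> simp [phi]

lemma phi_cont (b : Bool) (G : ℝ) : Continuous (phi b G) := by
  cases b
  · show Continuous fun t : ℝ => t * (t ^ 2 + G); fun_prop
  · show Continuous fun t : ℝ => t * ((t ^ 2 - 1) ^ 2 + G); fun_prop

lemma phi_odd (b : Bool) (G t : ℝ) : phi b G (-t) = - phi b G t := by
  cases b <;> simp [phi] <;> ring

lemma sq_atTop : Tendsto (fun t : ℝ => t ^ 2) atTop atTop :=
  tendsto_pow_atTop two_ne_zero

lemma phi_atTop (b : Bool) (G : ℝ) : Tendsto (phi b G) atTop atTop := by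
  cases b
  · show Tendsto (fun t : ℝ => t * (t ^ 2 + G)) atTop atTop
    exact tendsto_id.atTop_mul_atTop₀ (tendsto_atTop_add_const_right _ G sq_atTop)
  · show Tendsto (fun t : ℝ => t * ((t ^ 2 - 1) ^ 2 + G)) atTop atTop
    have h1 : Tendsto (fun t : ℝ => t ^ 2 - 1) atTop atTop :=
      tendsto_atTop_add_const_right _ (-1) sq_atTop |>.congr (fun x => by ring)
    have h2 : Tendsto (fun t : ℝ => (t ^ 2 - 1) ^ 2) atTop atTop :=
      (tendsto_pow_atTop two_ne_zero).comp h1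
    exact tendsto_id.atTop_mul_atTop₀ (tendsto_atTop_add_const_right _ G h2)

lemma phi_surj (b : Bool) (G : ℝ) : Function.Surjective (phi b G) := by
  refine (phi_cont b G).surjective (phi_atTop b G) ?_
  have h : Tendsto (fun t : ℝ => - phi b G (-t)) atBot atBot :=
    tendsto_neg_atTop_atBot.comp ((phi_atTop b G).comp tendsto_neg_atBot_atTop)
  exact h.congr (by intro t; rw [phi_odd]; ring)

lemma phi_ne_zero {b : Bool} {G : ℝ} (h : condB b G) {t : ℝ} (ht : t ≠ 0) :
    phi b G t ≠ 0 := by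
  cases b <;> simp only [condB, if_true, if_false, Bool.false_eq_true] at h <;>
    simp only [phi, if_true, if_false, Bool.false_eq_true]
  · have : 0 < t ^ 2 + G := by positivity
    exact mul_ne_zero ht this.ne'
  · have : 0 < (t ^ 2 - 1) ^ 2 + G := by positivity
    exact mul_ne_zero ht this.ne'

lemma phi_root {b : Bool} {G : ℝ} (h : ¬ condB b G) : ∃ t ≠ 0, phi b G t = 0 := by
  cases b <;> simp only [condB, if_true, if_false, Bool.false_eq_true, not_le, not_lt] at h
  · refine ⟨Real.sqrt (-G), (Real.sqrt_pos.mpr (by linarith)).ne', ?_⟩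
    show Real.sqrt (-G) * (Real.sqrt (-G) ^ 2 + G) = 0
    rw [Real.sq_sqrt (by linarith)]; ring
  · refine ⟨Real.sqrt (1 + Real.sqrt (-G)), ?_, ?_⟩
    · refine (Real.sqrt_pos.mpr ?_).ne'
      have := Real.sqrt_nonneg (-G); linarith
    · show Real.sqrt (1 + Real.sqrt (-G)) * ((Real.sqrt (1 + Real.sqrt (-G)) ^ 2 - 1) ^ 2 + G) = 0
      rw [Real.sq_sqrt (by positivity)]
      have : (1 + Real.sqrt (-G) - 1) = Real.sqrt (-G) := by ring
      rw [this, Real.sq_sqrt (by linarith)]; ring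

lemma phi_fiber (b : Bool) (G s : ℝ) :
    (∃ t, t ≠ 0 ∧ phi b G t = s) ↔ (s ≠ 0 ∨ ¬ condB b G) := by
  constructor
  · rintro ⟨t, ht, rfl⟩
    by_cases hc : condB b G
    · exact Or.inl (phi_ne_zero hc ht)
    · exact Or.inr hc
  · rintro (hs | hc)
    · obtain ⟨t, ht⟩ := phi_surj b G s
      exact ⟨t, fun h => hs (by rw [← ht, h, phi_zero]), ht⟩
    · obtain ⟨t, ht, h0⟩ := phi_root hc
      by_cases hs : s = 0
      · exact ⟨t, ht, by rw [h0, hs]⟩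
      · obtain ⟨t', ht'⟩ := phi_surj b G s
        exact ⟨t', fun h => hs (by rw [← ht', h, phi_zero]), ht'⟩

variable {n : ℕ}

/-- shear map (x,t) ↦ (x₀ + t x, t) -/
noncomputable def Psi (x₀ : Fin n → ℝ) (y : Fin (n+1) → ℝ) : Fin (n+1) → ℝ :=
  Fin.snoc (fun i => x₀ i + y (Fin.last n) * y i.castSucc) (y (Fin.last n))

/-- gadget map (x,t) ↦ (x, phi b (p(x)) t) -/
noncomputable def Hm (b : Bool) (p : MvPolynomial (Fin n) ℝ) (y : Fin (n+1) → ℝ) :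
    Fin (n+1) → ℝ :=
  Fin.snoc (Fin.init y) (phi b (eval (Fin.init y) p) (y (Fin.last n)))

lemma snoc_eq_iff {α : Type*} {a : Fin n → α} {t : α} {y : Fin (n+1) → α} :
    Fin.snoc a t = y ↔ a = Fin.init y ∧ t = y (Fin.last n) := by
  constructor
  · rintro rfl
    exact ⟨by simp, by simp⟩
  · rintro ⟨rfl, rfl⟩
    exact Fin.snoc_init_self y

lemma mem_range_Psi (x₀ : Fin n → ℝ) (y : Fin (n+1) → ℝ) :
    y ∈ Set.range (Psi x₀) ↔ (y (Fin.last n) ≠ 0 ∨ Fin.init y = x₀) := by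
  constructor
  · rintro ⟨w, rfl⟩
    by_cases h : w (Fin.last n) = 0
    · refine Or.inr ?_
      funext i
      simp [Psi, Fin.init, h]
    · refine Or.inl ?_
      simpa [Psi] using h
  · intro h
    by_cases ht : y (Fin.last n) = 0
    · replace h : Fin.init y = x₀ := h.resolve_left (by simpa using ht)
      refine ⟨y, ?_⟩
      rw [Psi, snoc_eq_iff]
      refine ⟨?_, rfl⟩
      funext i
      have := congrFun h i
      simp only [Fin.init] at this ⊢
      rw [ht, ← this]; ring
    · refine ⟨Fin.snoc (fun i => (y i.castSucc - x₀ i) / y (Fin.last n)) (y (Fin.last n)), ?_⟩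
      rw [Psi, snoc_eq_iff]
      constructor
      · funext i
        simp only [Fin.snoc_last, Fin.snoc_castSucc, Fin.init]
        field_simp
        ring
      · simp

lemma mem_range_Hm (b : Bool) (p : MvPolynomial (Fin n) ℝ)
    (F : (Fin (n+1) → ℝ) → (Fin (n+1) → ℝ)) (y : Fin (n+1) → ℝ) :
    y ∈ Set.range (Hm b p ∘ F) ↔
      ∃ t : ℝ, Fin.snoc (Fin.init y) t ∈ Set.range F ∧
        phi b (eval (Fin.init y) p) t = y (Fin.last n) := by
  constructor
  · rintro ⟨w, rfl⟩
    refine ⟨F w (Fin.last n), ?_, ?_⟩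
    · have : Fin.init ((Hm b p ∘ F) w) = Fin.init (F w) := by
        simp [Hm, Fin.init_snoc]
      rw [this, Fin.snoc_init_self]
      exact ⟨w, rfl⟩
    · have h1 : Fin.init ((Hm b p ∘ F) w) = Fin.init (F w) := by
        simp [Hm, Fin.init_snoc]
      rw [h1]
      simp [Hm, Fin.snoc_last]
  · rintro ⟨t, ⟨w, hw⟩, hphi⟩
    refine ⟨w, ?_⟩
    show Hm b p (F w) = y
    rw [hw, Hm, Fin.init_snoc, Fin.snoc_last, hphi, snoc_eq_iff]
    exact ⟨rfl, rfl⟩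

lemma eval_bind₁' {σ τ : Type*} (x : τ → ℝ) (h : σ → MvPolynomial τ ℝ)
    (φ : MvPolynomial σ ℝ) :
    eval x (bind₁ h φ) = eval (fun i => eval x (h i)) φ :=
  eval₂Hom_bind₁ (RingHom.id ℝ) x h φ

/-- polynomial family for Psi -/
noncomputable def Ppsi (x₀ : Fin n → ℝ) : Fin (n+1) → MvPolynomial (Fin (n+1)) ℝ :=
  Fin.snoc (fun i => C (x₀ i) + X (Fin.last n) * X i.castSucc) (X (Fin.last n))

/-- polynomial for the correction factor of Hm -/
noncomputable def Pq (b : Bool) : MvPolynomial (Fin (n+1)) ℝ :=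
  if b then ((X (Fin.last n)) ^ 2 - 1) ^ 2 else (X (Fin.last n)) ^ 2

/-- polynomial family for Hm -/
noncomputable def Ph (b : Bool) (p : MvPolynomial (Fin n) ℝ) :
    Fin (n+1) → MvPolynomial (Fin (n+1)) ℝ :=
  Fin.snoc (fun i => X i.castSucc)
    (X (Fin.last n) * (rename Fin.castSucc p + Pq b))

lemma eval_Ppsi (x₀ : Fin n → ℝ) (y : Fin (n+1) → ℝ) :
    (fun i => eval y (Ppsi x₀ i)) = Psi x₀ y := by
  funext i
  induction i using Fin.lastCases with
  | last => simp [Ppsi, Psi]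
  | cast i => simp [Ppsi, Psi]

lemma eval_Ph (b : Bool) (p : MvPolynomial (Fin n) ℝ) (y : Fin (n+1) → ℝ) :
    (fun i => eval y (Ph b p i)) = Hm b p y := by
  funext i
  induction i using Fin.lastCases with
  | last =>
    have hinit : (y ∘ Fin.castSucc) = Fin.init y := rfl
    cases b <;>
      simp [Ph, Hm, Pq, phi, eval_rename, hinit] <;> exact Or.inl (add_comm _ _)
  | cast i => simp [Ph, Hm, Fin.init]

variable {r : ℕ} (g : Fin r → MvPolynomial (Fin n) ℝ) (strict : Fin r → Bool)
  (x₀ : Fin n → ℝ) (i₀ : Fin r)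

/-- composite map built from a list of constraint indices -/
noncomputable def Fm (l : List (Fin r)) : (Fin (n+1) → ℝ) → (Fin (n+1) → ℝ) :=
  l.foldr (fun j F => Hm (strict j) (g j) ∘ F) (Hm (strict i₀) (g i₀) ∘ Psi x₀)

/-- composite polynomial family -/
noncomputable def Pl (l : List (Fin r)) : Fin (n+1) → MvPolynomial (Fin (n+1)) ℝ :=
  l.foldr (fun j F => fun i => bind₁ F (Ph (strict j) (g j) i))
    (fun i => bind₁ (Ppsi x₀) (Ph (strict i₀) (g i₀) i))

lemma eval_Pl (l : List (Fin r)) :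
    (fun y i => eval y (Pl g strict x₀ i₀ l i)) = Fm g strict x₀ i₀ l := by
  induction l with
  | nil =>
    funext y i
    show eval y (bind₁ (Ppsi x₀) (Ph (strict i₀) (g i₀) i)) = _
    rw [eval_bind₁', eval_Ppsi]
    exact congrFun (eval_Ph _ _ _) i
  | cons j l ih =>
    funext y i
    show eval y (bind₁ (Pl g strict x₀ i₀ l) (Ph (strict j) (g j) i)) = _
    rw [eval_bind₁']
    have h1 : (fun k => eval y (Pl g strict x₀ i₀ l k)) = Fm g strict x₀ i₀ l y :=
      congrFun ih y
    rw [h1]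
    exact congrFun (eval_Ph _ _ _) i

lemma range_Fm (h₀ : ¬ condB (strict i₀) (eval x₀ (g i₀))) (l : List (Fin r))
    (y : Fin (n+1) → ℝ) :
    y ∈ Set.range (Fm g strict x₀ i₀ l) ↔
      (y (Fin.last n) ≠ 0 ∨
        ∃ i, (i = i₀ ∨ i ∈ l) ∧ ¬ condB (strict i) (eval (Fin.init y) (g i))) := by
  induction l generalizing y with
  | nil =>
    show y ∈ Set.range (Hm (strict i₀) (g i₀) ∘ Psi x₀) ↔ _
    rw [mem_range_Hm]
    have hsnoc : ∀ t : ℝ, (Fin.snoc (Fin.init y) t ∈ Set.range (Psi x₀) ↔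
        (t ≠ 0 ∨ Fin.init y = x₀)) := by
      intro t
      rw [mem_range_Psi]
      simp
    by_cases hx : Fin.init y = x₀
    · constructor
      · intro _
        refine Or.inr ⟨i₀, Or.inl rfl, ?_⟩
        rw [hx]; exact h₀
      · intro _
        obtain ⟨t, ht⟩ := phi_surj (strict i₀) (eval (Fin.init y) (g i₀)) (y (Fin.last n))
        exact ⟨t, (hsnoc t).mpr (Or.inr hx), ht⟩
    · have : ∀ t : ℝ, (Fin.snoc (Fin.init y) t ∈ Set.range (Psi x₀) ↔ t ≠ 0) := by
        intro t
        rw [hsnoc t]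
        simp [hx]
      constructor
      · rintro ⟨t, htmem, hphi⟩
        have ht : t ≠ 0 := (this t).mp htmem
        rcases (phi_fiber _ _ _).mp ⟨t, ht, hphi⟩ with h | h
        · exact Or.inl h
        · exact Or.inr ⟨i₀, Or.inl rfl, h⟩
      · intro h
        have : y (Fin.last n) ≠ 0 ∨ ¬ condB (strict i₀) (eval (Fin.init y) (g i₀)) := by
          rcases h with h | ⟨i, hi, hc⟩
          · exact Or.inl h
          · rcases hi with rfl | hi
            · exact Or.inr hc
            · simp at hi
        obtain ⟨t, ht, hphi⟩ := (phi_fiber _ _ _).mpr this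
        exact ⟨t, (hsnoc t).mpr (Or.inl ht), hphi⟩
  | cons j l ih =>
    show y ∈ Set.range (Hm (strict j) (g j) ∘ Fm g strict x₀ i₀ l) ↔ _
    rw [mem_range_Hm]
    have hsnoc : ∀ t : ℝ, (Fin.snoc (Fin.init y) t ∈ Set.range (Fm g strict x₀ i₀ l) ↔
        (t ≠ 0 ∨ ∃ i, (i = i₀ ∨ i ∈ l) ∧ ¬ condB (strict i) (eval (Fin.init y) (g i)))) := by
      intro t
      rw [ih]
      simp
    set D := ∃ i, (i = i₀ ∨ i ∈ l) ∧ ¬ condB (strict i) (eval (Fin.init y) (g i)) with hD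
    by_cases hd : D
    · constructor
      · intro _
        refine Or.inr ?_
        obtain ⟨i, hi, hc⟩ := hd
        exact ⟨i, by rcases hi with rfl | hi; · exact Or.inl rfl
                     · exact Or.inr (List.mem_cons_of_mem j hi), hc⟩
      · intro _
        obtain ⟨t, ht⟩ := phi_surj (strict j) (eval (Fin.init y) (g j)) (y (Fin.last n))
        exact ⟨t, (hsnoc t).mpr (Or.inr hd), ht⟩
    · constructor
      · rintro ⟨t, htmem, hphi⟩
        have ht : t ≠ 0 := by
          rcases (hsnoc t).mp htmem with h | h
          · exact h
          · exact absurd h hd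
        rcases (phi_fiber _ _ _).mp ⟨t, ht, hphi⟩ with h | h
        · exact Or.inl h
        · exact Or.inr ⟨j, Or.inr (List.mem_cons_self), h⟩
      · intro h
        have : y (Fin.last n) ≠ 0 ∨ ¬ condB (strict j) (eval (Fin.init y) (g j)) := by
          rcases h with h | ⟨i, hi, hc⟩
          · exact Or.inl h
          · rcases hi with rfl | hi
            · exact absurd ⟨i, Or.inl rfl, hc⟩ hd
            · rcases List.mem_cons.mp hi with rfl | hi
              · exact Or.inr hc
              · exact absurd ⟨i, Or.inr hi, hc⟩ hd
        obtain ⟨t, ht, hphi⟩ := (phi_fiber _ _ _).mpr this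
        exact ⟨t, (hsnoc t).mpr (Or.inl ht), hphi⟩

end SAaux

open SAaux in
/-- If S ⊊ ℝⁿ is a proper basic semialgebraic set then ℝ^{n+1} \ (S×{0}) is a
polynomial image of ℝ^{n+1}. -/
theorem stmt_5 (n r : ℕ) (g : Fin r → MvPolynomial (Fin n) ℝ) (strict : Fin r → Bool)
    (S : Set (Fin n → ℝ))
    (hS : S = {x | ∀ i, if strict i then 0 < eval x (g i) else 0 ≤ eval x (g i)})
    (hproper : S ≠ Set.univ) :
    ∃ f : Fin (n + 1) → MvPolynomial (Fin (n + 1)) ℝ,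
      Set.range (fun x i => eval x (f i)) =
        {y : Fin (n + 1) → ℝ |
          (fun i : Fin n => y i.castSucc) ∈ S ∧ y (Fin.last n) = 0}ᶜ := by
  subst hS
  obtain ⟨x₀, hx₀⟩ := (Set.ne_univ_iff_exists_notMem _).mp hproper
  rw [Set.mem_setOf_eq, not_forall] at hx₀
  obtain ⟨i₀, hi₀⟩ := hx₀
  have h₀ : ¬ condB (strict i₀) (eval x₀ (g i₀)) := hi₀
  refine ⟨Pl g strict x₀ i₀ (List.finRange r), ?_⟩
  rw [eval_Pl]
  ext y
  rw [Set.mem_range] at *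
  have hy : y ∈ Set.range (Fm g strict x₀ i₀ (List.finRange r)) ↔ _ :=
    range_Fm g strict x₀ i₀ h₀ (List.finRange r) y
  rw [show (∃ x, Fm g strict x₀ i₀ (List.finRange r) x = y) ↔
      y ∈ Set.range (Fm g strict x₀ i₀ (List.finRange r)) from Iff.rfl, hy]
  simp only [Set.mem_compl_iff, Set.mem_setOf_eq, not_and_or]
  constructor
  · rintro (h | ⟨i, _, hc⟩)
    · exact Or.inr h
    · refine Or.inl ?_
      intro hall
      exact hc (hall i)
  · rintro (h | h)
    · rw [not_forall] at h
      obtain ⟨i, hi⟩ := h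
      exact Or.inr ⟨i, Or.inr (List.mem_finRange i), hi⟩
    · exact Or.inl h
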